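/- Let m be a finite type and let W be a positive semidefinite complex matrix indexed by Fin 3 ⊕ m whose top-left block satisfies W₀₀ a b = v a * conj (v b) for a nonzero vector v : Fin 3 → ℂ. Suppose V̂ : m → ℂ and a positive semidefinite Q : Matrix m m ℂ satisfy W₀₁ a k = v a * conj (V̂ k) and W₁₁ k l = V̂ k * conj (V̂ l) + Q k l for all indices (where W₀₁ and W₁₁ are the top-right and bottom-right blocks of W). Then rank W = 1 if and only if Q = 0. (This is the rank characterization part of Lemma 2.) -/

import Mathlib

open Matrix
open scoped ComplexOrder

/-- **Lemma 2 (rank characterization part).** Let `W` be a PSD matrix indexed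
by `Fin 3 ⊕ m` whose top-left block is `v vᴴ` for a nonzero `v`, and suppose
`V̂ : m → ℂ` and a PSD matrix `Q` satisfy `W₀₁ = v V̂ᴴ` and
`W₁₁ = V̂ V̂ᴴ + Q`. Then `rank W = 1` if and only if `Q = 0`. -/
theorem psd_slack_block_rank_one_iff
    {m : Type*} [Fintype m] [DecidableEq m]
    (W : Matrix (Fin 3 ⊕ m) (Fin 3 ⊕ m) ℂ) (hW : W.PosSemidef)
    (v : Fin 3 → ℂ) (hv : v ≠ 0)
    (hW00 : ∀ a b : Fin 3, W (Sum.inl a) (Sum.inl b) = v a * starRingEnd ℂ (v b))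
    (Vhat : m → ℂ) (Q : Matrix m m ℂ) (hQ : Q.PosSemidef)
    (hW01 : ∀ (a : Fin 3) (k : m),
      W (Sum.inl a) (Sum.inr k) = v a * starRingEnd ℂ (Vhat k))
    (hW11 : ∀ k l : m,
      W (Sum.inr k) (Sum.inr l) = Vhat k * starRingEnd ℂ (Vhat l) + Q k l) :
    W.rank = 1 ↔ Q = 0 := by
  obtain ⟨b0, hb0⟩ : ∃ b, v b ≠ 0 := Function.ne_iff.mp hv
  have hvb2 : v b0 * starRingEnd ℂ (v b0) ≠ 0 :=
    mul_ne_zero hb0 (by simpa using hb0)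
  constructor
  · -- rank 1 → Q = 0
    intro hrank
    set c0 : (Fin 3 ⊕ m) → ℂ := fun i => W i (Sum.inl b0) with hc0
    have hc0mem : c0 ∈ LinearMap.range W.mulVecLin := by
      refine ⟨Pi.single (Sum.inl b0) 1, ?_⟩
      simp [mulVecLin_apply, c0]
      rfl
    have hc0ne : c0 ≠ 0 := by
      intro h
      have := congrFun h (Sum.inl b0)
      rw [hc0] at this
      simp only [Pi.zero_apply] at this
      rw [hW00] at this
      exact hvb2 this
    have hne : (⟨c0, hc0mem⟩ : LinearMap.range W.mulVecLin) ≠ 0 := by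
      simpa [Subtype.ext_iff] using hc0ne
    rw [Matrix.rank] at hrank
    have hall := (finrank_eq_one_iff_of_nonzero' (⟨c0, hc0mem⟩ : LinearMap.range W.mulVecLin) hne).mp hrank
    ext k l
    -- column l of W
    have hcolmem : (fun i => W i (Sum.inr l)) ∈ LinearMap.range W.mulVecLin := by
      refine ⟨Pi.single (Sum.inr l) 1, ?_⟩
      simp [mulVecLin_apply]
      rfl
    obtain ⟨c, hc⟩ := hall ⟨_, hcolmem⟩
    have hc' : ∀ i, c * W i (Sum.inl b0) = W i (Sum.inr l) := by
      intro i
      have := congrFun (Subtype.ext_iff.mp hc) i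
      simpa [c0] using this
    have h1 := hc' (Sum.inl b0)
    rw [hW00, hW01] at h1
    -- c * conj (v b0) = conj (Vhat l)
    have h1' : c * starRingEnd ℂ (v b0) = starRingEnd ℂ (Vhat l) := by
      apply mul_left_cancel₀ hb0
      linear_combination h1
    have h2 := hc' (Sum.inr k)
    have hherm : W (Sum.inr k) (Sum.inl b0) = starRingEnd ℂ (v b0) * Vhat k := by
      have := hW.isHermitian.apply (Sum.inr k) (Sum.inl b0)
      rw [← this, hW01]
      simp [mul_comm]
    rw [hherm, hW11] at h2
    have : Q k l = 0 := by
      have : c * starRingEnd ℂ (v b0) * Vhat k = Vhat k * starRingEnd ℂ (Vhat l) + Q k l := by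
        linear_combination h2
      rw [h1'] at this
      linear_combination -this
    simpa using this
  · -- Q = 0 → rank 1
    intro hQ0
    subst hQ0
    set u : (Fin 3 ⊕ m) → ℂ := Sum.elim v Vhat with hu
    have hWall : ∀ i j, W i j = u i * starRingEnd ℂ (u j) := by
      rintro (a | k) (b | l)
      · simpa [u] using hW00 a b
      · simpa [u] using hW01 a l
      · have := hW.isHermitian.apply (Sum.inr k) (Sum.inl b)
        rw [← this, hW01]
        simp [mul_comm, u]
      · simpa [u] using hW11 k l
    have hune : u ≠ 0 := by
      intro h
      exact hb0 (by simpa [u] using congrFun h (Sum.inl b0))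
    have hmulvec : ∀ x, W *ᵥ x = (star u ⬝ᵥ x) • u := by
      intro x
      ext i
      simp only [mulVec, dotProduct, Pi.smul_apply, smul_eq_mul, Pi.star_apply]
      rw [Finset.sum_mul]
      refine Finset.sum_congr rfl fun j _ => ?_
      rw [hWall, RCLike.star_def]
      ring
    set s : ℂ := star u ⬝ᵥ u with hs
    have hsne : s ≠ 0 := fun h => hune (by
      have := (dotProduct_star_self_eq_zero (v := u)).mp h
      exact this)
    set w0 : (Fin 3 ⊕ m) → ℂ := s • u with hw0
    have hw0mem : w0 ∈ LinearMap.range W.mulVecLin := ⟨u, by rw [mulVecLin_apply, hmulvec]⟩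
    have hw0ne : w0 ≠ 0 := fun h => hune (by
      have := smul_eq_zero.mp h
      tauto)
    have hne : (⟨w0, hw0mem⟩ : LinearMap.range W.mulVecLin) ≠ 0 := by
      simpa [Subtype.ext_iff] using hw0ne
    rw [Matrix.rank]
    rw [finrank_eq_one_iff_of_nonzero' (⟨w0, hw0mem⟩ : LinearMap.range W.mulVecLin) hne]
    rintro ⟨w, x, hx⟩
    refine ⟨(star u ⬝ᵥ x) * s⁻¹, ?_⟩
    apply Subtype.ext
    simp only [SetLike.mk_smul_mk]
    rw [hw0]
    rw [← hx, mulVecLin_apply, hmulvec]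
    rw [smul_smul, mul_assoc, inv_mul_cancel₀ hsne, mul_one]
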